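/- Let k ≥ 3 and let n be sufficiently large with n ≢ 1 (mod k). Define pairwise disjoint sets V_1,...,V_k each of size n, choose U_i ⊆ V_i with |U_i| = ⌊(n-1)/k⌋, and let H_0 be the k-partite k-graph whose edges are exactly the legal k-sets meeting ⋃_i U_i. Then every legal (k-1)-set has degree at least ⌊(n-1)/k⌋, but the maximum matching of H_0 has size at most k·⌊(n-1)/k⌋ < n - 1. -/

import Mathlib

/-- The extremal example H₀: for k ≥ 3 and large n with n ≢ 1 (mod k),
taking U_i ⊆ V_i of size ⌊(n-1)/k⌋ and edges the legal k-sets meeting ⋃ U_i,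
every legal (k-1)-set has degree ≥ ⌊(n-1)/k⌋ but ν(H₀) ≤ k⌊(n-1)/k⌋ < n - 1. -/
theorem stmt1 (k : ℕ) (hk : 3 ≤ k) :
    ∃ n0 : ℕ, ∀ n : ℕ, n0 ≤ n → n % k ≠ 1 →
    ∀ U : Fin k → Finset (Fin n), (∀ i, (U i).card = (n - 1) / k) →
    ∀ E : Finset (Finset (Fin k × Fin n)),
    (∀ e : Finset (Fin k × Fin n),
        e ∈ E ↔ ((∀ i, (e.filter (fun v => v.1 = i)).card = 1) ∧ ∃ v ∈ e, v.2 ∈ U v.1)) →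
    ((∀ S : Finset (Fin k × Fin n), S.card = k - 1 →
        (∀ i, (S.filter (fun v => v.1 = i)).card ≤ 1) →
        (n - 1) / k ≤ (Finset.univ.filter (fun v => insert v S ∈ E)).card) ∧
     (∀ M ⊆ E, (∀ e ∈ M, ∀ f ∈ M, e ≠ f → Disjoint e f) → M.card ≤ k * ((n - 1) / k)) ∧
     k * ((n - 1) / k) < n - 1) := by
  classical
  refine ⟨2, fun n hn hmod U hU E hE => ?_⟩
  have hk0 : 0 < k := by omega
  have hn0 : 0 < n := by omega
  refine ⟨?_, ?_, ?_⟩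
  · -- degree condition
    intro S hScard hSleg
    have hsum : S.card = ∑ i : Fin k, (S.filter (fun v => v.1 = i)).card :=
      Finset.card_eq_sum_card_fiberwise (fun x _ => Finset.mem_univ x.1)
    have hex : ∃ i₀ : Fin k, (S.filter (fun v => v.1 = i₀)).card = 0 := by
      by_contra h
      push_neg at h
      have hge : (k : ℕ) ≤ ∑ i : Fin k, (S.filter (fun v => v.1 = i)).card := by
        calc (k : ℕ) = ∑ _i : Fin k, 1 := by simp
          _ ≤ _ := Finset.sum_le_sum (fun i _ => by have := h i; omega)
      omega
    obtain ⟨i₀, hi₀⟩ := hex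
    have hone : ∀ j : Fin k, j ≠ i₀ → (S.filter (fun v => v.1 = j)).card = 1 := by
      intro j hj
      by_contra hne
      have hj0 : (S.filter (fun v => v.1 = j)).card = 0 := by
        have := hSleg j; omega
      have heq : ∑ i ∈ ((Finset.univ.erase i₀).erase j),
          (S.filter (fun v => v.1 = i)).card
          = ∑ i : Fin k, (S.filter (fun v => v.1 = i)).card := by
        apply Finset.sum_subset (fun x _ => Finset.mem_univ x)
        intro x _ hx
        simp only [Finset.mem_erase, Finset.mem_univ, and_true, not_and, not_not] at hx
        by_cases hxj : x = j
        · subst hxj; exact hj0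
        · have : x = i₀ := by
            by_contra hxi
            exact hxj (by tauto)
          subst this; exact hi₀
      have hle : ∑ i ∈ ((Finset.univ.erase i₀).erase j),
          (S.filter (fun v => v.1 = i)).card ≤ ((Finset.univ.erase i₀).erase j).card := by
        calc _ ≤ ∑ _i ∈ ((Finset.univ.erase i₀).erase j), 1 :=
              Finset.sum_le_sum (fun i _ => hSleg i)
          _ = _ := by simp
      have hcard2 : ((Finset.univ.erase i₀).erase j).card = k - 2 := by
        rw [Finset.card_erase_of_mem (by simp [Finset.mem_erase, hj]),
          Finset.card_erase_of_mem (Finset.mem_univ _)]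
        simp only [Finset.card_univ, Fintype.card_fin]
        omega
      omega
    have hinj : Function.Injective (fun x : Fin n => ((i₀, x) : Fin k × Fin n)) := by
      intro a b h; simpa using h
    have hsubset : (U i₀).image (fun x => ((i₀, x) : Fin k × Fin n)) ⊆
        Finset.univ.filter (fun v => insert v S ∈ E) := by
      intro v hv
      simp only [Finset.mem_image] at hv
      obtain ⟨x, hx, rfl⟩ := hv
      simp only [Finset.mem_filter, Finset.mem_univ, true_and]
      rw [hE]
      constructor
      · intro i
        rw [Finset.filter_insert]
        by_cases hi : i = i₀
        · rw [hi, if_pos rfl]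
          have hemp : S.filter (fun v => v.1 = i₀) = ∅ := Finset.card_eq_zero.mp hi₀
          rw [hemp]; simp
        · have hcond : ¬(((i₀, x) : Fin k × Fin n).1 = i) := fun h => hi (by simpa using h.symm)
          rw [if_neg hcond]
          exact hone i hi
      · exact ⟨(i₀, x), Finset.mem_insert_self _ _, hx⟩
    calc (n - 1) / k = ((U i₀).image (fun x => ((i₀, x) : Fin k × Fin n))).card := by
          rw [Finset.card_image_of_injective _ hinj, hU]
      _ ≤ _ := Finset.card_le_card hsubset
  · -- matching bound
    intro M hME hMdis
    have hw : ∀ e ∈ M, ∃ v ∈ e, v.2 ∈ U v.1 := fun e he => ((hE e).mp (hME he)).2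
    set f : Finset (Fin k × Fin n) → Fin k × Fin n :=
      fun e => if h : ∃ v ∈ e, v.2 ∈ U v.1 then h.choose else (⟨0, hk0⟩, ⟨0, hn0⟩) with hf
    have hfmem : ∀ e ∈ M, f e ∈ e ∧ (f e).2 ∈ U (f e).1 := by
      intro e he
      have h := hw e he
      simp only [hf, dif_pos h]
      exact ⟨h.choose_spec.1, h.choose_spec.2⟩
    set T : Finset (Fin k × Fin n) :=
      Finset.univ.biUnion (fun i => (U i).image (fun x => (i, x))) with hT
    have hTcard : T.card = k * ((n - 1) / k) := by
      rw [hT, Finset.card_biUnion]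
      · have : ∀ i : Fin k, ((U i).image (fun x => ((i, x) : Fin k × Fin n))).card
            = (n - 1) / k := by
          intro i
          rw [Finset.card_image_of_injective _ (fun a b h => by simpa using h), hU]
        simp only [this, Finset.sum_const, Finset.card_univ, Fintype.card_fin, smul_eq_mul]
      · intro i _ j _ hij
        rw [Function.onFun, Finset.disjoint_left]
        intro a hai haj
        simp only [Finset.mem_image] at hai haj
        obtain ⟨x, _, rfl⟩ := hai
        obtain ⟨y, _, h⟩ := haj
        exact hij (by simpa using (congrArg Prod.fst h).symm)
    rw [← hTcard]
    apply Finset.card_le_card_of_injOn f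
    · intro e he
      obtain ⟨h1, h2⟩ := hfmem e he
      rw [hT, Finset.mem_coe, Finset.mem_biUnion]
      exact ⟨(f e).1, Finset.mem_univ _, Finset.mem_image.mpr ⟨(f e).2, h2, rfl⟩⟩
    · intro e he e' he' hfe
      by_contra hne
      have hd := hMdis e he e' he' hne
      exact (Finset.disjoint_left.mp hd (hfmem e he).1) (hfe ▸ (hfmem e' he').1)
  · -- arithmetic
    have hr : (n - 1) % k ≠ 0 := by
      intro h
      have hdvd : k ∣ n - 1 := Nat.dvd_of_mod_eq_zero h
      obtain ⟨m, hm⟩ := hdvd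
      have hn1 : n = k * m + 1 := by omega
      have : n % k = 1 := by
        rw [hn1, Nat.mul_add_mod]
        exact Nat.mod_eq_of_lt (by omega)
      exact hmod this
    have hdm := Nat.div_add_mod (n - 1) k
    set m := k * ((n - 1) / k) with hmdef
    omega
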